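/- arXiv:math/0104023 — 2 statements merged into one kernel-verified Lean document; each statement's English description precedes it below -/
import Mathlib

section
/- Let f : M → N be a homomorphism of nilpotent groups such that the induced map f₊ : H₁(M,ℤ) → H₁(N,ℤ) on abelianizations is surjective. Then f is surjective. -/
open Subgroup Pointwise
open scoped commutatorElement

/-- A central element drops out of the right argument of a commutator. -/
private lemma commEl_central_right {N : Type*} [Group N] (a b z : N)
    (hz : z ∈ Subgroup.center N) : ⁅a, b * z⁆ = ⁅a, b⁆ := by
  have hza : a⁻¹ * z = z * a⁻¹ := Subgroup.mem_center_iff.mp hz a⁻¹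
  simp only [commutatorElement_def, mul_inv_rev]
  calc a * (b * z) * a⁻¹ * (z⁻¹ * b⁻¹)
      = a * b * (z * a⁻¹) * (z⁻¹ * b⁻¹) := by simp only [mul_assoc]
    _ = a * b * (a⁻¹ * z) * (z⁻¹ * b⁻¹) := by rw [← hza]
    _ = a * b * a⁻¹ * (z * (z⁻¹ * b⁻¹)) := by simp only [mul_assoc]
    _ = a * b * a⁻¹ * b⁻¹ := by rw [mul_inv_cancel_left]

/-- A central element drops out of the left argument of a commutator. -/
private lemma commEl_central_left {N : Type*} [Group N] (a b z : N)
    (hz : z ∈ Subgroup.center N) : ⁅a * z, b⁆ = ⁅a, b⁆ := by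
  have hzb : b * z = z * b := Subgroup.mem_center_iff.mp hz b
  simp only [commutatorElement_def, mul_inv_rev]
  calc a * z * b * (z⁻¹ * a⁻¹) * b⁻¹
      = a * (z * b) * (z⁻¹ * (a⁻¹ * b⁻¹)) := by simp only [mul_assoc]
    _ = a * (b * z) * (z⁻¹ * (a⁻¹ * b⁻¹)) := by rw [← hzb]
    _ = a * b * (z * (z⁻¹ * (a⁻¹ * b⁻¹))) := by simp only [mul_assoc]
    _ = a * b * (a⁻¹ * b⁻¹) := by rw [mul_inv_cancel_left]
    _ = a * b * a⁻¹ * b⁻¹ := by simp only [mul_assoc]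

/-- If a subgroup of a nilpotent group together with the commutator subgroup
generates the whole group, it is the whole group. -/
private lemma my_sup_commutator_eq_top {N : Type*} [Group N] [Group.IsNilpotent N]
    (H : Subgroup N) (hH : H ⊔ _root_.commutator N = ⊤) : H = ⊤ := by
  obtain ⟨n, hn⟩ : ∃ n, Group.nilpotencyClass N ≤ n := ⟨_, le_rfl⟩
  induction n generalizing N with
  | zero =>
    have : Subsingleton N := nilpotencyClass_zero_iff_subsingleton.mp (Nat.le_zero.mp hn)
    ext x
    simp [Subsingleton.elim x 1, one_mem]
  | succ n ih =>
    by_cases hs : Subsingleton N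
    · ext x; simp [Subsingleton.elim x 1, one_mem]
    have : Nontrivial N := not_subsingleton_iff_nontrivial.mp hs
    set Z := Subgroup.center N with hZ
    let π : N →* N ⧸ Z := QuotientGroup.mk' Z
    have hπ : Function.Surjective π := QuotientGroup.mk_surjective
    have hmapc : (_root_.commutator N).map π = _root_.commutator (N ⧸ Z) := by
      rw [_root_.commutator_def, Subgroup.map_commutator, _root_.commutator_def,
        Subgroup.map_top_of_surjective _ hπ]
    have hsup : H.map π ⊔ _root_.commutator (N ⧸ Z) = ⊤ := by
      rw [← hmapc, ← Subgroup.map_sup, hH, Subgroup.map_top_of_surjective _ hπ]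
    have hclass : Group.nilpotencyClass (N ⧸ Z) ≤ n := by
      have h1 := nilpotencyClass_quotient_center (G := N)
      show Group.nilpotencyClass (N ⧸ Subgroup.center N) ≤ n
      omega
    have htop : H.map π = ⊤ := ih (H.map π) hsup hclass
    -- hence H ⊔ Z = ⊤
    have hHZ : H ⊔ Z = ⊤ := by
      have := congrArg (Subgroup.comap π) htop
      rwa [Subgroup.comap_map_eq, QuotientGroup.ker_mk', Subgroup.comap_top] at this
    -- hence commutator N ≤ H
    have hcle : _root_.commutator N ≤ H := by
      rw [_root_.commutator_def, Subgroup.commutator_le]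
      intro g₁ _ g₂ _
      have hg₁ : g₁ ∈ ((H : Set N) * (Z : Set N)) := by
        rw [← Subgroup.mul_normal H Z]
        show g₁ ∈ (↑(H ⊔ Z) : Set N)
        rw [hHZ]; trivial
      have hg₂ : g₂ ∈ ((H : Set N) * (Z : Set N)) := by
        rw [← Subgroup.mul_normal H Z]
        show g₂ ∈ (↑(H ⊔ Z) : Set N)
        rw [hHZ]; trivial
      obtain ⟨h₁, hh₁, z₁, hz₁, rfl⟩ := hg₁
      obtain ⟨h₂, hh₂, z₂, hz₂, rfl⟩ := hg₂
      rw [commEl_central_right _ _ _ hz₂, commEl_central_left _ _ _ hz₁]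
      rw [commutatorElement_def]
      exact mul_mem (mul_mem (mul_mem hh₁ hh₂) (inv_mem hh₁)) (inv_mem hh₂)
    rw [← hH, sup_eq_left.mpr hcle]

/-- If `f : M → N` is a homomorphism of nilpotent groups inducing a surjection
on abelianizations (`H₁(-,ℤ)`), then `f` is surjective. -/
theorem stmt_1 (M N : Type*) [Group M] [Group N]
    [Group.IsNilpotent M] [Group.IsNilpotent N]
    (f : M →* N) (h : Function.Surjective (Abelianization.map f)) :
    Function.Surjective f := by
  have hsup : f.range ⊔ _root_.commutator N = ⊤ := by
    rw [eq_top_iff]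
    intro n _
    obtain ⟨m', hm⟩ := h (Abelianization.of n)
    obtain ⟨m, rfl⟩ : ∃ m : M, Abelianization.of m = m' :=
      Quot.exists_rep m'
    rw [Abelianization.map_of] at hm
    have hcomm : (f m)⁻¹ * n ∈ _root_.commutator N := by
      have := QuotientGroup.eq.mp hm
      simpa using this
    have hn : n = f m * ((f m)⁻¹ * n) := by group
    rw [hn]
    exact Subgroup.mul_mem_sup ⟨m, rfl⟩ hcomm
  have hr := my_sup_commutator_eq_top f.range hsup
  intro n
  have : n ∈ f.range := hr ▸ Subgroup.mem_top n
  exact this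
end

section
/- Let A be a unital k-algebra with a two-sided ideal J, and let P = {x ∈ 1 + J : x invertible} (or more specifically, let P be a subgroup of the units of A contained in 1 + J). Define P^i = P ∩ (1 + J^i). Then [P^i, P^j] ⊆ P^{i+j} for all i, j ≥ 1. -/
open scoped commutatorElement

lemma stmt_4_aux (k A : Type*) [Field k] [Ring A] [Algebra k A]
    (J : Submodule k A) (hJr : ∀ r : A, ∀ a ∈ J, a * r ∈ J)
    (n : ℕ) (a : A) (ha : a ∈ J ^ (n + 1)) (r : A) : a * r ∈ J ^ (n + 1) := by
  rw [pow_succ] at ha ⊢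
  refine Submodule.mul_induction_on ha (fun m hm b hb => ?_) (fun u v hu hv => ?_)
  · rw [mul_assoc]; exact Submodule.mul_mem_mul hm (hJr r b hb)
  · rw [add_mul]; exact add_mem hu hv

/-- Let `A` be a unital `k`-algebra, `J ⊆ A` a two-sided ideal, and `P` a subgroup of
`A^×` contained in `1 + J`.  With `P^i = P ∩ (1 + J^i)`, one has
`[P^i, P^j] ⊆ P^{i+j}`: the commutator of an element of `P^i` and an element of
`P^j` lies in `P^{i+j}`. -/
theorem stmt_4 (k A : Type*) [Field k] [Ring A] [Algebra k A]
    (J : Submodule k A)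
    (hJl : ∀ r : A, ∀ a ∈ J, r * a ∈ J) (hJr : ∀ r : A, ∀ a ∈ J, a * r ∈ J)
    (P : Subgroup Aˣ) (hP : ∀ x ∈ P, (x : A) - 1 ∈ J)
    (i j : ℕ) (hi : 1 ≤ i) (hj : 1 ≤ j)
    (x y : Aˣ) (hx : x ∈ P) (hy : y ∈ P)
    (hxi : (x : A) - 1 ∈ J ^ i) (hyj : (y : A) - 1 ∈ J ^ j) :
    ((⁅x, y⁆ : Aˣ) : A) - 1 ∈ J ^ (i + j) := by
  have key : (x : A) * y - (y : A) * x ∈ J ^ (i + j) := by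
    have h1 : ((x : A) - 1) * ((y : A) - 1) ∈ J ^ (i + j) := by
      rw [pow_add]; exact Submodule.mul_mem_mul hxi hyj
    have h2 : ((y : A) - 1) * ((x : A) - 1) ∈ J ^ (i + j) := by
      rw [add_comm, pow_add]; exact Submodule.mul_mem_mul hyj hxi
    have heq : (x : A) * y - (y : A) * x
        = ((x : A) - 1) * ((y : A) - 1) - ((y : A) - 1) * ((x : A) - 1) := by
      noncomm_ring
    rw [heq]; exact sub_mem h1 h2
  have hc : ((⁅x, y⁆ : Aˣ) : A) - 1
      = ((x : A) * y - (y : A) * x) * ((↑x⁻¹ : A) * ↑y⁻¹) := by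
    simp [commutatorElement_def, sub_mul, mul_assoc]
  obtain ⟨m, hm⟩ : ∃ m, i + j = m + 1 := ⟨i + j - 1, by omega⟩
  rw [hc, hm]
  exact stmt_4_aux k A J hJr m _ (hm ▸ key) _
end
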